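/- Let L ⊆ ℝ^m be a compact set, K ⊆ L a compact set with positive distance r₀ from the boundary ∂L, and suppose r ∈ (0, r₀) is such that every connected component of K contains a closed ball of radius r. Let ψ : ℝ^m → ℝ^m be a homeomorphism with |ψ(z) − z| ≤ r for all z ∈ L. If K has finitely many connected components, then K ⊆ ψ(L). -/

import Mathlib

/-- If K ⊆ L are compact in ℝ^m, K is at distance at least r₀ > r > 0 from ∂L, K has finitely
many connected components each containing a closed ball of radius r, and ψ is a homeomorphism
moving points of L by at most r, then K ⊆ ψ(L). -/
theorem stmt11 (m : ℕ) (L K : Set (EuclideanSpace ℝ (Fin m)))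
    (hL : IsCompact L) (hK : IsCompact K) (hKL : K ⊆ L)
    (r₀ r : ℝ) (hr₀ : 0 < r₀)
    (hdist : ∀ x ∈ K, ∀ y ∈ frontier L, r₀ ≤ dist x y)
    (hr : r ∈ Set.Ioo 0 r₀)
    (hball : ∀ x ∈ K, ∃ c, Metric.closedBall c r ⊆ connectedComponentIn K x)
    (ψ : EuclideanSpace ℝ (Fin m) ≃ₜ EuclideanSpace ℝ (Fin m))
    (hψ : ∀ z ∈ L, ‖ψ z - z‖ ≤ r)
    (hfin : Set.Finite {S : Set (EuclideanSpace ℝ (Fin m)) |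
        ∃ x ∈ K, S = connectedComponentIn K x}) :
    K ⊆ ψ '' L := by
  intro x hx
  have hCK : connectedComponentIn K x ⊆ K := connectedComponentIn_subset K x
  obtain ⟨c, hc⟩ := hball x hx
  have hcC : c ∈ connectedComponentIn K x := hc (Metric.mem_closedBall_self hr.1.le)
  have hcL : c ∈ L := hKL (hCK hcC)
  have hψcC : ψ c ∈ connectedComponentIn K x := by
    apply hc
    rw [Metric.mem_closedBall, dist_eq_norm]
    exact hψ c hcL
  have hclosed : IsClosed (ψ '' L) := (hL.image ψ.continuous).isClosed
  have hUopen : IsOpen (ψ '' interior L) := ψ.isOpenMap _ isOpen_interior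
  have hkey : ∀ y ∈ connectedComponentIn K x, y ∈ ψ '' L → y ∈ ψ '' interior L := by
    rintro y hyC ⟨z, hzL, hzy⟩
    refine ⟨z, ?_, hzy⟩
    by_contra hz
    have hzfr : z ∈ frontier L := ⟨subset_closure hzL, hz⟩
    have h1 := hdist y (hCK hyC) z hzfr
    have h2 : dist y z ≤ r := by
      rw [← hzy, dist_eq_norm]
      exact hψ z hzL
    linarith [hr.2]
  by_contra hxψ
  have hsub : connectedComponentIn K x ⊆ ψ '' interior L ∪ (ψ '' L)ᶜ := by
    intro y hy
    by_cases h : y ∈ ψ '' L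
    · exact Or.inl (hkey y hy h)
    · exact Or.inr h
  obtain ⟨p, hpC, hpU, hpV⟩ :=
    (isPreconnected_connectedComponentIn (x := x) (F := K)) _ _ hUopen
      hclosed.isOpen_compl hsub ⟨ψ c, hψcC, hkey _ hψcC ⟨c, hcL, rfl⟩⟩
      ⟨x, mem_connectedComponentIn hx, hxψ⟩
  exact hpV (Set.image_mono (f := ψ) interior_subset hpU)
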